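/- Let Y be a strictly convex Banach space and let R : c0(⊕_{n=1}^∞ ℓ2^n) → Y be a bounded linear operator with ‖R‖ = 1 that attains its norm at a unit vector u satisfying ‖u − e₁‖ < 1. Then R(e_k) = 0 for every coordinate k ∉ I(1), i.e. for every k ≥ 2. -/
import Mathlib

open Filter Topology

noncomputable section

/-- The Euclidean space `ℓ₂ⁿ⁺¹` forming the `n`-th block (so blocks have dimensions 1, 2, 3, …),
i.e. the block `I(n+1)` of the paper. -/
abbrev E2 (n : ℕ) : Type := EuclideanSpace ℝ (Fin (n + 1))

/-- `c₀(⊕ₙ ℓ₂ⁿ)`: the subspace of the `ℓ∞`-sum of the spaces `ℓ₂ⁿ` consisting of those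
elements whose block norms tend to `0`; it carries the norm `‖x‖ = sup_n ‖x n‖`. -/
def c0E2 : Submodule ℝ (lp E2 ⊤) where
  carrier := {x | Tendsto (fun n => ‖x n‖) atTop (𝓝 0)}
  add_mem' := by
    intro x y hx hy
    refine squeeze_zero (fun n => norm_nonneg _) (fun n => ?_) (by simpa using hx.add hy)
    rw [lp.coeFn_add]
    exact norm_add_le _ _
  zero_mem' := by
    simp only [Set.mem_setOf_eq, lp.coeFn_zero, Pi.zero_apply, norm_zero]
    exact tendsto_const_nhds
  smul_mem' := by
    intro c x hx
    have h : ∀ n, ‖(c • x : lp E2 ⊤) n‖ = ‖c‖ * ‖x n‖ := by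
      intro n; rw [lp.coeFn_smul]; simp [norm_smul]
    have := hx.const_mul ‖c‖
    simp only [mul_zero] at this
    exact Tendsto.congr (fun n => (h n).symm) this

/-- The standard unit basis vector of `c₀(⊕ₙ ℓ₂ⁿ)` sitting in block `j` at coordinate `i`. -/
def stdBasis (j : ℕ) (i : Fin (j + 1)) : c0E2 :=
  ⟨lp.single ⊤ j (EuclideanSpace.single i 1), by
    refine Tendsto.congr' ?_ (tendsto_const_nhds : Tendsto (fun _ : ℕ => (0:ℝ)) atTop (𝓝 0))
    filter_upwards [eventually_gt_atTop j] with n hn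
    rw [lp.single_apply_ne ⊤ j _ (by omega : n ≠ j), norm_zero]⟩

/-- Let `Y` be a strictly convex Banach space and `R : c₀(⊕ₙ ℓ₂ⁿ) → Y` a
norm-one operator attaining its norm at a unit vector `u` with `‖u - e₁‖ < 1`. Then `R` kills
every basis vector outside the first block `I(1)` (which consists of `e₁` alone). -/
theorem stmt9 (Y : Type*) [NormedAddCommGroup Y] [NormedSpace ℝ Y]
    [StrictConvexSpace ℝ Y] [CompleteSpace Y]
    (R : c0E2 →L[ℝ] Y) (hR : ‖R‖ = 1) (u : c0E2) (hu : ‖u‖ = 1) (hRu : ‖R u‖ = 1)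
    (hue : ‖u - stdBasis 0 0‖ < 1) :
    ∀ j : ℕ, j ≠ 0 → ∀ i : Fin (j + 1), R (stdBasis j i) = 0 := by
  intro j hj i
  by_contra hv
  set e : c0E2 := stdBasis j i with he
  -- block j of u has norm < 1
  have hub : ‖(u : lp E2 ⊤) j‖ < 1 := by
    have h1 : ((u - stdBasis 0 0 : c0E2) : lp E2 ⊤) j = (u : lp E2 ⊤) j := by
      have : ((u - stdBasis 0 0 : c0E2) : lp E2 ⊤) = (u : lp E2 ⊤) - (stdBasis 0 0 : c0E2) := rfl
      rw [this, lp.coeFn_sub, Pi.sub_apply]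
      rw [show ((stdBasis 0 0 : c0E2) : lp E2 ⊤) j = 0 from
        lp.single_apply_ne ⊤ 0 _ hj]
      simp
    calc ‖(u : lp E2 ⊤) j‖ = ‖((u - stdBasis 0 0 : c0E2) : lp E2 ⊤) j‖ := by rw [h1]
      _ ≤ ‖((u - stdBasis 0 0 : c0E2) : lp E2 ⊤)‖ :=
          lp.norm_apply_le_norm ENNReal.top_ne_zero _ j
      _ = ‖u - stdBasis 0 0‖ := rfl
      _ < 1 := hue
  set t : ℝ := 1 - ‖(u : lp E2 ⊤) j‖ with htdef
  have ht : 0 < t := by linarith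
  -- ‖u ± t • e‖ ≤ 1
  have key : ∀ s : ℝ, |s| = t → ‖u + s • e‖ ≤ 1 := by
    intro s hs
    have : ‖((u + s • e : c0E2) : lp E2 ⊤)‖ ≤ 1 := by
      refine lp.norm_le_of_forall_le zero_le_one fun n => ?_
      have hco : ((u + s • e : c0E2) : lp E2 ⊤) = (u : lp E2 ⊤) + s • (e : lp E2 ⊤) := rfl
      rw [hco, lp.coeFn_add, Pi.add_apply, lp.coeFn_smul, Pi.smul_apply]
      rcases eq_or_ne n j with rfl | hn
      · have hsing : (e : lp E2 ⊤) n = EuclideanSpace.single i 1 := lp.single_apply_self ⊤ n _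
        calc ‖(u : lp E2 ⊤) n + s • (e : lp E2 ⊤) n‖
            ≤ ‖(u : lp E2 ⊤) n‖ + ‖s • (e : lp E2 ⊤) n‖ := norm_add_le _ _
          _ ≤ ‖(u : lp E2 ⊤) n‖ + t := by
              rw [hsing, norm_smul, EuclideanSpace.norm_single, norm_one, mul_one, Real.norm_eq_abs, hs]
          _ = 1 := by rw [htdef]; ring
      · rw [show (e : lp E2 ⊤) n = 0 from lp.single_apply_ne ⊤ j _ hn]
        simp only [smul_zero, add_zero]
        calc ‖(u : lp E2 ⊤) n‖ ≤ ‖(u : lp E2 ⊤)‖ :=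
              lp.norm_apply_le_norm ENNReal.top_ne_zero _ n
          _ = 1 := hu
    exact this
  have hplus : ‖R u + t • R e‖ ≤ 1 := by
    have := (R.le_opNorm (u + t • e)).trans_eq (by rw [hR, one_mul])
    rw [map_add, map_smul] at this
    exact this.trans (key t (abs_of_pos ht))
  have hminus : ‖R u - t • R e‖ ≤ 1 := by
    have := (R.le_opNorm (u + (-t) • e)).trans_eq (by rw [hR, one_mul])
    rw [map_add, map_smul] at this
    have h2 := this.trans (key (-t) (by rw [abs_neg, abs_of_pos ht]))
    simpa [sub_eq_add_neg, neg_smul] using h2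
  have hne : R u + t • R e ≠ R u - t • R e := by
    intro h
    apply hv
    have : (2 * t) • R e = 0 := by
      have := sub_eq_zero.mpr h
      rw [show R u + t • R e - (R u - t • R e) = (2 * t) • R e by module] at this
      exact this
    have h2t : (2 * t) ≠ 0 := by positivity
    exact (smul_eq_zero.mp this).resolve_left h2t
  have := norm_combo_lt_of_ne hplus hminus hne (by norm_num : (0:ℝ) < 1/2)
    (by norm_num : (0:ℝ) < 1/2) (by norm_num)
  rw [show (1/2 : ℝ) • (R u + t • R e) + (1/2 : ℝ) • (R u - t • R e) = R u by module] at this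
  exact absurd hRu (by linarith)
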